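/- arXiv:1901.07653 — 4 statements merged into one kernel-verified Lean document; each statement's English description precedes it below -/
import Mathlib

section
/- Let H be an n×n Hermitian complex matrix and φ ∈ ℂⁿ a nonzero vector. Then the Rayleigh quotient of the imaginary-time-evolved vector, namely the function β ↦ ⟨exp(−βH)φ, H exp(−βH)φ⟩ / ‖exp(−βH)φ‖², is monotone nonincreasing on ℝ. -/
open scoped InnerProductSpace
open NormedSpace

section Aux
attribute [local instance] Matrix.linftyOpNormedAddCommGroup Matrix.linftyOpNormedRing Matrix.linftyOpNormedAlgebra

variable {n : ℕ}

theorem rayleigh_aux (H : Matrix (Fin n) (Fin n) ℂ) (hH : H.IsHermitian)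
    (φ : EuclideanSpace ℂ (Fin n)) (hφ : φ ≠ 0) :
    Antitone (fun β : ℝ =>
      RCLike.re (⟪Matrix.toEuclideanLin (exp ((-β : ℂ) • H)) φ,
          Matrix.toEuclideanLin H (Matrix.toEuclideanLin (exp ((-β : ℂ) • H)) φ)⟫_ℂ) /
        ‖Matrix.toEuclideanLin (exp ((-β : ℂ) • H)) φ‖ ^ 2) := by
  set T := Matrix.toEuclideanLin H with hT
  set ψ : ℝ → EuclideanSpace ℂ (Fin n) :=
    fun β => Matrix.toEuclideanLin (exp ((-β : ℂ) • H)) φ with hψdef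
  have hmul : ∀ (A B : Matrix (Fin n) (Fin n) ℂ) (v : EuclideanSpace ℂ (Fin n)),
      Matrix.toEuclideanLin (A * B) v = Matrix.toEuclideanLin A (Matrix.toEuclideanLin B v) := by
    intro A B v
    simp [Matrix.toEuclideanLin_apply, Matrix.mulVec_mulVec]
  -- ψ is never zero
  have hψ0 : ∀ β, ψ β ≠ 0 := by
    intro β h0
    have hE : exp ((β : ℂ) • H) * exp ((-β : ℂ) • H) = 1 := by
      rw [← Matrix.exp_add_of_commute]
      · norm_num
      · exact ((Commute.refl H).smul_left _).smul_right _
    apply hφ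
    have h1 : Matrix.toEuclideanLin (exp ((β : ℂ) • H)) (ψ β) = φ := by
      rw [hψdef, ← hmul, hE]
      simp [Matrix.toEuclideanLin_apply]
    rw [h0, map_zero] at h1
    exact h1.symm
  -- derivative of ψ
  have hψd : ∀ β, HasDerivAt ψ (-(T (ψ β))) β := by
    intro β
    have hexp : HasDerivAt (fun t : ℝ => exp ((-t : ℂ) • H)) (-(H * exp ((-β : ℂ) • H))) β := by
      have h1 : HasDerivAt (fun u : ℂ => exp (u • H)) (H * exp ((-β : ℂ) • H)) ((-β : ℝ) : ℂ) := by
        have := hasDerivAt_exp_smul_const' (𝕂 := ℂ) H ((-β : ℂ))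
        simp only [Complex.ofReal_neg] at this ⊢
        exact this
      have h2 : HasDerivAt (fun t : ℝ => (-t : ℂ)) (-1 : ℂ) β := by
        simpa using ((hasDerivAt_id β).neg).ofReal_comp
      have h4 : HasDerivAt (fun t : ℝ => exp ((-t : ℂ) • H))
          ((-1 : ℂ) • (H * exp ((-β : ℂ) • H))) β := h1.scomp_of_eq β h2 (by push_cast; ring)
      simpa using h4
    set L : Matrix (Fin n) (Fin n) ℂ →L[ℂ] EuclideanSpace ℂ (Fin n) :=
      LinearMap.toContinuousLinearMap
        ((Matrix.toEuclideanLin : Matrix (Fin n) (Fin n) ℂ ≃ₗ[ℂ] _).toLinearMap.flip φ) with hL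
    have h5 := (L.restrictScalars ℝ).hasFDerivAt.comp_hasDerivAt β hexp
    have hLa : ∀ M : Matrix (Fin n) (Fin n) ℂ, L M = Matrix.toEuclideanLin M φ := fun M => rfl
    simp only [hLa, hψdef, hT, ContinuousLinearMap.coe_restrictScalars', Function.comp_def] at h5 ⊢
    refine h5.congr_deriv ?_
    show L (-(H * exp ((-β : ℂ) • H))) = _
    rw [map_neg, hLa, hmul]
  -- derivative of T ∘ ψ
  have hTψd : ∀ β, HasDerivAt (fun t => T (ψ t)) (-(T (T (ψ β)))) β := by
    intro β
    have := ((LinearMap.toContinuousLinearMap T).restrictScalars ℝ).hasFDerivAt.comp_hasDerivAt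
      β (hψd β)
    simp only [ContinuousLinearMap.coe_restrictScalars', LinearMap.coe_toContinuousLinearMap', Function.comp_def, map_neg] at this
    exact this
  -- symmetry of T
  have hsym : ∀ x y, ⟪T x, y⟫_ℂ = ⟪x, T y⟫_ℂ := Matrix.isHermitian_iff_isSymmetric.mp hH
  -- numerator and denominator
  set N : ℝ → ℝ := fun β => RCLike.re ⟪ψ β, T (ψ β)⟫_ℂ with hN
  set D : ℝ → ℝ := fun β => RCLike.re ⟪ψ β, ψ β⟫_ℂ with hD
  have hDval : ∀ β, D β = ‖ψ β‖ ^ 2 := by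
    intro β; rw [hD]; exact inner_self_eq_norm_sq _
  have hDpos : ∀ β, 0 < D β := by
    intro β
    rw [hDval]
    exact pow_pos (norm_pos_iff.mpr (hψ0 β)) 2
  have hNd : ∀ β, HasDerivAt N (-2 * ‖T (ψ β)‖ ^ 2) β := by
    intro β
    have h6 := (hψd β).inner ℂ (hTψd β)
    have h7 := (RCLike.reCLM (K := ℂ)).hasFDerivAt.comp_hasDerivAt β h6
    have h8 : RCLike.re (⟪ψ β, -(T (T (ψ β)))⟫_ℂ + ⟪-(T (ψ β)), T (ψ β)⟫_ℂ)
        = -2 * ‖T (ψ β)‖ ^ 2 := by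
      rw [inner_neg_right, inner_neg_left, ← hsym (ψ β) (T (ψ β)), map_add, map_neg,
        inner_self_eq_norm_sq]
      ring
    have h9 : HasDerivAt N
        (RCLike.re (⟪ψ β, -(T (T (ψ β)))⟫_ℂ + ⟪-(T (ψ β)), T (ψ β)⟫_ℂ)) β := h7
    rwa [h8] at h9
  have hDd : ∀ β, HasDerivAt D (-2 * N β) β := by
    intro β
    have h6 := (hψd β).inner ℂ (hψd β)
    have h7 := (RCLike.reCLM (K := ℂ)).hasFDerivAt.comp_hasDerivAt β h6
    have h8 : RCLike.re (⟪ψ β, -(T (ψ β))⟫_ℂ + ⟪-(T (ψ β)), ψ β⟫_ℂ) = -2 * N β := by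
      simp only [inner_neg_right, inner_neg_left, map_add, map_neg,
        inner_re_symm (T (ψ β)) (ψ β), hN]
      ring
    have h9 : HasDerivAt D
        (RCLike.re (⟪ψ β, -(T (ψ β))⟫_ℂ + ⟪-(T (ψ β)), ψ β⟫_ℂ)) β := h7
    rwa [h8] at h9
  have hFd : ∀ β, HasDerivAt (fun t => N t / D t)
      ((-2 * ‖T (ψ β)‖ ^ 2 * D β - N β * (-2 * N β)) / D β ^ 2) β :=
    fun β => (hNd β).div (hDd β) (ne_of_gt (hDpos β))
  have hgoal : (fun β : ℝ => RCLike.re (⟪ψ β, T (ψ β)⟫_ℂ) / ‖ψ β‖ ^ 2)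
      = fun t => N t / D t := by
    funext β
    rw [hDval]
  rw [hgoal]
  apply antitone_of_deriv_nonpos (fun β => (hFd β).differentiableAt)
  intro β
  rw [(hFd β).deriv]
  apply div_nonpos_of_nonpos_of_nonneg _ (sq_nonneg _)
  have habs : |N β| ≤ ‖ψ β‖ * ‖T (ψ β)‖ := by
    rw [hN]
    exact (RCLike.abs_re_le_norm _).trans (norm_inner_le_norm _ _)
  have hsq : N β ^ 2 ≤ (‖ψ β‖ * ‖T (ψ β)‖) ^ 2 := by
    rw [← sq_abs]
    exact pow_le_pow_left₀ (abs_nonneg _) habs 2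
  have := hDval β
  nlinarith [sq_nonneg (‖ψ β‖ * ‖T (ψ β)‖)]

end Aux

/-- The Rayleigh quotient (energy expectation value) is monotone nonincreasing along
exact imaginary-time evolution. -/
theorem rayleigh_quotient_antitone_along_imaginary_time
    {n : ℕ} (H : Matrix (Fin n) (Fin n) ℂ) (hH : H.IsHermitian)
    (φ : EuclideanSpace ℂ (Fin n)) (hφ : φ ≠ 0) :
    Antitone (fun β : ℝ =>
      RCLike.re (⟪Matrix.toEuclideanLin (exp ((-β : ℂ) • H)) φ,
          Matrix.toEuclideanLin H (Matrix.toEuclideanLin (exp ((-β : ℂ) • H)) φ)⟫_ℂ) /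
        ‖Matrix.toEuclideanLin (exp ((-β : ℂ) • H)) φ‖ ^ 2) :=
  rayleigh_aux H hH φ hφ
end

section
/- Let A₁, …, A_m be n×n complex matrices. Then the Trotter product (exp(A₁/k) · exp(A₂/k) ⋯ exp(A_m/k))^k converges to exp(A₁ + A₂ + ⋯ + A_m) as k → ∞. -/
open NormedSpace Filter

section aux

variable {𝔸 : Type*} [NormedRing 𝔸]

/-- In a normed ring, `‖a^(k+1) - b^(k+1)‖ ≤ (k+1) M^k ‖a - b‖` when `‖a‖, ‖b‖ ≤ M`. -/
lemma aux_pow_sub_pow (a b : 𝔸) {M : ℝ} (ha : ‖a‖ ≤ M) (hb : ‖b‖ ≤ M) :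
    ∀ k : ℕ, ‖a ^ (k + 1) - b ^ (k + 1)‖ ≤ ((k : ℝ) + 1) * M ^ k * ‖a - b‖
  | 0 => by simp
  | (k + 1) => by
    have hM : 0 ≤ M := le_trans (norm_nonneg a) ha
    have key : a ^ (k + 2) - b ^ (k + 2)
        = a * (a ^ (k + 1) - b ^ (k + 1)) + (a - b) * b ^ (k + 1) := by
      rw [mul_sub, sub_mul, ← pow_succ', ← pow_succ']; abel
    have h1 := aux_pow_sub_pow a b ha hb k
    have hbk : ‖b ^ (k + 1)‖ ≤ M ^ (k + 1) :=
      (norm_pow_le' b k.succ_pos).trans (pow_le_pow_left₀ (norm_nonneg b) hb _)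
    calc ‖a ^ (k + 2) - b ^ (k + 2)‖
        ≤ ‖a * (a ^ (k + 1) - b ^ (k + 1))‖ + ‖(a - b) * b ^ (k + 1)‖ := by
          rw [key]; exact norm_add_le _ _
      _ ≤ ‖a‖ * ‖a ^ (k + 1) - b ^ (k + 1)‖ + ‖a - b‖ * ‖b ^ (k + 1)‖ :=
          add_le_add (norm_mul_le _ _) (norm_mul_le _ _)
      _ ≤ M * (((k : ℝ) + 1) * M ^ k * ‖a - b‖) + ‖a - b‖ * M ^ (k + 1) :=
          add_le_add
            (mul_le_mul ha h1 (norm_nonneg _)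
              hM)
            (mul_le_mul_of_nonneg_left hbk (norm_nonneg _))
      _ = ((((k : ℕ) + 1 : ℕ) : ℝ) + 1) * M ^ (k + 1) * ‖a - b‖ := by push_cast; ring

variable [NormedAlgebra ℂ 𝔸] [CompleteSpace 𝔸]

/-- Norm bound for the exponential. -/
lemma aux_norm_exp_le (h1 : ‖(1 : 𝔸)‖ ≤ 1) (x : 𝔸) : ‖exp x‖ ≤ Real.exp ‖x‖ := by
  rw [exp_eq_tsum ℂ]
  refine (norm_tsum_le_tsum_norm (norm_expSeries_summable' (𝕂 := ℂ) x)).trans ?_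
  rw [Real.exp_eq_exp_ℝ, exp_eq_tsum ℝ]
  refine Summable.tsum_le_tsum ?_ (norm_expSeries_summable' (𝕂 := ℂ) x)
    (expSeries_summable' (𝕂 := ℝ) ‖x‖)
  intro m
  rw [norm_smul, smul_eq_mul, norm_inv, Complex.norm_natCast]
  cases m with
  | zero => simpa using h1
  | succ m =>
    refine mul_le_mul_of_nonneg_left ?_ (by positivity)
    exact norm_pow_le' x m.succ_pos

/-- Norm bound for a product of exponentials. -/
lemma aux_prod_norm_le (h1 : ‖(1 : 𝔸)‖ ≤ 1) :
    ∀ {m : ℕ} (A : Fin m → 𝔸) (t : ℂ),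
      ‖(List.ofFn fun i => exp (t • A i)).prod‖ ≤ Real.exp (‖t‖ * ∑ i, ‖A i‖)
  | 0, A, t => by simpa using h1
  | (m + 1), A, t => by
    have ih := aux_prod_norm_le h1 (fun i => A i.succ) t
    have hexp : ‖exp (t • A 0)‖ ≤ Real.exp (‖t‖ * ‖A 0‖) := by
      simpa [norm_smul] using aux_norm_exp_le h1 (t • A 0)
    calc ‖(List.ofFn fun i : Fin (m + 1) => exp (t • A i)).prod‖
        = ‖exp (t • A 0) * (List.ofFn fun i : Fin m => exp (t • A i.succ)).prod‖ := by
          rw [List.ofFn_succ, List.prod_cons]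
      _ ≤ ‖exp (t • A 0)‖ * ‖(List.ofFn fun i : Fin m => exp (t • A i.succ)).prod‖ :=
          norm_mul_le _ _
      _ ≤ Real.exp (‖t‖ * ‖A 0‖) * Real.exp (‖t‖ * ∑ i : Fin m, ‖A i.succ‖) :=
          mul_le_mul hexp ih (norm_nonneg _) (Real.exp_pos _).le
      _ = Real.exp (‖t‖ * ∑ i : Fin (m + 1), ‖A i‖) := by
          rw [← Real.exp_add, Fin.sum_univ_succ, mul_add]

/-- The derivative at `0` of the product of exponentials is the sum. -/
lemma aux_hasDerivAt : ∀ {m : ℕ} (A : Fin m → 𝔸),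
    HasDerivAt (fun t : ℂ => (List.ofFn fun i => exp (t • A i)).prod) (∑ i, A i) 0
  | 0, A => by
    simpa using hasDerivAt_const (0 : ℂ) (1 : 𝔸)
  | (m + 1), A => by
    have ih := aux_hasDerivAt (fun i => A i.succ)
    have h0 : HasDerivAt (fun t : ℂ => exp (t • A 0)) (A 0) 0 := by
      simpa using hasDerivAt_exp_smul_const (𝕂 := ℂ) (A 0) 0
    have hmul := h0.mul ih
    have hval : (List.ofFn fun i : Fin m => exp ((0 : ℂ) • A i.succ)).prod = 1 := by
      simp
    rw [hval] at hmul
    have : (fun t : ℂ => exp (t • A 0) *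
        (List.ofFn fun i : Fin m => exp (t • A i.succ)).prod)
        = fun t : ℂ => (List.ofFn fun i : Fin (m + 1) => exp (t • A i)).prod := by
      funext t
      rw [List.ofFn_succ, List.prod_cons]
    simp only [Pi.mul_def] at hmul
    rw [this] at hmul
    simpa [Fin.sum_univ_succ, exp_zero] using hmul

end aux

/-- The Lie–Trotter product formula for matrices:
`(exp(A₁/k) ⋯ exp(A_m/k))^k → exp(A₁ + ⋯ + A_m)` as `k → ∞`. -/
theorem lie_trotter_product_formula
    {n m : ℕ} (A : Fin m → Matrix (Fin n) (Fin n) ℂ) :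
    Tendsto
      (fun k : ℕ => (List.ofFn (fun i => exp ((k : ℂ)⁻¹ • A i))).prod ^ k)
      atTop
      (nhds (exp (∑ i, A i))) := by
  letI instR : NormedRing (Matrix (Fin n) (Fin n) ℂ) := Matrix.linftyOpNormedRing
  letI instA : NormedAlgebra ℂ (Matrix (Fin n) (Fin n) ℂ) := Matrix.linftyOpNormedAlgebra
  set S := ∑ i, A i with hS
  set c := ∑ i, ‖A i‖ with hc
  have hc0 : 0 ≤ c := Finset.sum_nonneg fun i _ => norm_nonneg _
  have h1 : ‖(1 : Matrix (Fin n) (Fin n) ℂ)‖ ≤ 1 := by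
    rcases Nat.eq_zero_or_pos n with h | h
    · subst h
      rw [Subsingleton.elim (1 : Matrix (Fin 0) (Fin 0) ℂ) 0, norm_zero]
      exact zero_le_one
    · haveI : Nonempty (Fin n) := Fin.pos_iff_nonempty.mp h
      exact le_of_eq (Matrix.linfty_opNormOneClass (α := ℂ) (n := Fin n)).norm_one
  set F : ℂ → Matrix (Fin n) (Fin n) ℂ :=
    fun t => (List.ofFn fun i => exp (t • A i)).prod with hF
  set G : ℂ → Matrix (Fin n) (Fin n) ℂ := fun t => exp (t • S) with hG
  have hFd : HasDerivAt F S 0 := aux_hasDerivAt A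
  have hGd : HasDerivAt G S 0 := by
    have := hasDerivAt_exp_smul_const (𝕂 := ℂ) S 0
    simp only [zero_smul, exp_zero, one_mul] at this
    exact this
  have hhd : HasDerivAt (fun t : ℂ => F t - G t) 0 0 := by have := hFd.sub hGd; simp only [sub_self] at this; exact this
  have h00 : F 0 - G 0 = 0 := by simp [hF, hG]
  have ho : (fun t : ℂ => F t - G t) =o[nhds (0 : ℂ)] fun t => t := by
    have h2 := hasDerivAt_iff_isLittleO.mp hhd
    simpa [h00] using h2
  have htk : Tendsto (fun k : ℕ => ((k : ℂ))⁻¹) atTop (nhds 0) := by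
    have h3 : Tendsto (fun k : ℕ => ((k : ℝ))⁻¹) atTop (nhds 0) :=
      tendsto_inv_atTop_nhds_zero_nat
    have h4 := (Complex.continuous_ofReal.tendsto 0).comp h3
    simpa [Function.comp_def, Complex.ofReal_inv] using h4
  have ho2 : (fun k : ℕ => ‖F ((k : ℂ))⁻¹ - G ((k : ℂ))⁻¹‖)
      =o[atTop] fun k : ℕ => ‖((k : ℂ))⁻¹‖ :=
    (ho.comp_tendsto htk).norm_norm
  have hmul : Tendsto (fun k : ℕ => (k : ℝ) * ‖F ((k : ℂ))⁻¹ - G ((k : ℂ))⁻¹‖)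
      atTop (nhds 0) := by
    refine ho2.tendsto_div_nhds_zero.congr fun k => ?_
    rw [norm_inv, Complex.norm_natCast, div_eq_mul_inv, inv_inv, mul_comm]
  have hbound : ∀ᶠ k : ℕ in atTop,
      ‖F ((k : ℂ))⁻¹ ^ k - exp S‖
        ≤ Real.exp c * ((k : ℝ) * ‖F ((k : ℂ))⁻¹ - G ((k : ℂ))⁻¹‖) := by
    filter_upwards [eventually_ge_atTop 1] with k hk
    obtain ⟨j, rfl⟩ : ∃ j, k = j + 1 := ⟨k - 1, (Nat.succ_pred_eq_of_pos hk).symm⟩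
    set t : ℂ := (((j + 1 : ℕ) : ℂ))⁻¹ with ht
    have htnorm : ‖t‖ = (((j + 1 : ℕ) : ℝ))⁻¹ := by
      rw [ht, norm_inv, Complex.norm_natCast]
    have hknz : ((j + 1 : ℕ) : ℂ) ≠ 0 := Nat.cast_ne_zero.mpr (Nat.succ_ne_zero j)
    have hGpow : G t ^ (j + 1) = exp S := by
      rw [hG]
      simp only
      rw [← Matrix.exp_nsmul, ← Nat.cast_smul_eq_nsmul ℂ, smul_smul, mul_inv_cancel₀ hknz, one_smul]
    have hc1 : ‖S‖ ≤ c := norm_sum_le _ _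
    have hB : ‖F t‖ ≤ Real.exp (‖t‖ * c) := aux_prod_norm_le h1 A t
    have hC : ‖G t‖ ≤ Real.exp (‖t‖ * c) := by
      refine (aux_norm_exp_le h1 (t • S)).trans ?_
      apply Real.exp_le_exp.mpr
      rw [norm_smul]
      exact mul_le_mul_of_nonneg_left hc1 (norm_nonneg t)
    have hpow := aux_pow_sub_pow (F t) (G t) hB hC j
    have hMj : Real.exp (‖t‖ * c) ^ j ≤ Real.exp c := by
      rw [← Real.exp_nat_mul]
      apply Real.exp_le_exp.mpr
      rw [htnorm, ← mul_assoc]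
      apply mul_le_of_le_one_left hc0
      rw [← div_eq_mul_inv]
      apply div_le_one_of_le₀ _ (by positivity)
      push_cast; linarith
    calc ‖F t ^ (j + 1) - exp S‖
        = ‖F t ^ (j + 1) - G t ^ (j + 1)‖ := by rw [hGpow]
      _ ≤ ((j : ℝ) + 1) * Real.exp (‖t‖ * c) ^ j * ‖F t - G t‖ := hpow
      _ ≤ ((j : ℝ) + 1) * Real.exp c * ‖F t - G t‖ := by
          refine mul_le_mul_of_nonneg_right ?_ (norm_nonneg _)
          exact mul_le_mul_of_nonneg_left hMj (by positivity)
      _ = Real.exp c * (((j + 1 : ℕ) : ℝ) * ‖F t - G t‖) := by push_cast; ring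
  have hupper : Tendsto
      (fun k : ℕ => Real.exp c * ((k : ℝ) * ‖F ((k : ℂ))⁻¹ - G ((k : ℂ))⁻¹‖))
      atTop (nhds 0) := by
    simpa using hmul.const_mul (Real.exp c)
  have hnorm0 : Tendsto (fun k : ℕ => ‖F ((k : ℂ))⁻¹ ^ k - exp S‖) atTop (nhds 0) :=
    squeeze_zero' (Eventually.of_forall fun k => norm_nonneg _) hbound hupper
  exact tendsto_iff_norm_sub_tendsto_zero.mpr hnorm0
end

section
/- Let H be an n×n Hermitian complex matrix, φ ∈ ℂⁿ, and τ ∈ ℝ. Define the imaginary-time vectors Φ_l = exp(−l·τ·H)φ for natural numbers l. Then for all natural numbers l, l′, r with l + l′ = 2r, the Hamiltonian matrix element satisfies ⟨Φ_l, H Φ_{l′}⟩ = ⟨Φ_r, H Φ_r⟩. -/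
open scoped InnerProductSpace
open NormedSpace

lemma qlanczos_toEuclideanLin_mul {n : ℕ} (A B : Matrix (Fin n) (Fin n) ℂ)
    (x : EuclideanSpace ℂ (Fin n)) :
    Matrix.toEuclideanLin (A * B) x = Matrix.toEuclideanLin A (Matrix.toEuclideanLin B x) := by
  simp [Matrix.toEuclideanLin_apply, Matrix.mulVec_mulVec]

lemma qlanczos_aux {n : ℕ} (H : Matrix (Fin n) (Fin n) ℂ) (hH : H.IsHermitian)
    (φ : EuclideanSpace ℂ (Fin n)) (a b : ℂ) (ha : star a = a) :
    ⟪Matrix.toEuclideanLin (exp (a • H)) φ,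
      Matrix.toEuclideanLin H (Matrix.toEuclideanLin (exp (b • H)) φ)⟫_ℂ
      = ⟪φ, Matrix.toEuclideanLin (H * exp ((a + b) • H)) φ⟫_ℂ := by
  have hcomm : Commute (a • H) (b • H) :=
    ((Commute.refl H).smul_left a).smul_right b
  have hEa : (exp (a • H)).conjTranspose = exp (a • H) := by
    rw [← Matrix.exp_conjTranspose, Matrix.conjTranspose_smul, hH.eq, ha]
  have key : exp (a • H) * (H * exp (b • H)) = H * exp ((a + b) • H) := by
    have h1 : Commute (exp (a • H)) H := (((Commute.refl H).smul_left a)).exp_left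
    rw [← mul_assoc, h1.eq, mul_assoc, ← Matrix.exp_add_of_commute (a • H) (b • H) hcomm, add_smul]
  calc ⟪Matrix.toEuclideanLin (exp (a • H)) φ,
      Matrix.toEuclideanLin H (Matrix.toEuclideanLin (exp (b • H)) φ)⟫_ℂ
      = ⟪φ, LinearMap.adjoint (Matrix.toEuclideanLin (exp (a • H)))
          (Matrix.toEuclideanLin H (Matrix.toEuclideanLin (exp (b • H)) φ))⟫_ℂ := by
        rw [LinearMap.adjoint_inner_right]
    _ = ⟪φ, Matrix.toEuclideanLin (H * exp ((a + b) • H)) φ⟫_ℂ := by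
        rw [← Matrix.toEuclideanLin_conjTranspose_eq_adjoint, hEa,
          ← qlanczos_toEuclideanLin_mul, ← qlanczos_toEuclideanLin_mul, mul_assoc, key]

/-- QLanczos Hamiltonian matrix element identity: for imaginary-time vectors
`Φ_l = exp(−lτH)φ` with `H` Hermitian, `⟨Φ_l, H Φ_{l′}⟩ = ⟨Φ_r, H Φ_r⟩` whenever
`l + l′ = 2r`. -/
theorem qlanczos_hamiltonian_matrix_element_identity
    {n : ℕ} (H : Matrix (Fin n) (Fin n) ℂ) (hH : H.IsHermitian)
    (φ : EuclideanSpace ℂ (Fin n)) (τ : ℝ)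
    (Φ : ℕ → EuclideanSpace ℂ (Fin n))
    (hΦ : Φ = fun l : ℕ => Matrix.toEuclideanLin (exp ((-(l : ℂ) * (τ : ℂ)) • H)) φ)
    (l l' r : ℕ) (h : l + l' = 2 * r) :
    ⟪Φ l, Matrix.toEuclideanLin H (Φ l')⟫_ℂ
      = ⟪Φ r, Matrix.toEuclideanLin H (Φ r)⟫_ℂ := by
  subst hΦ
  have hst : ∀ m : ℕ, star (-(m : ℂ) * (τ : ℂ)) = -(m : ℂ) * (τ : ℂ) := by
    intro m
    simp [star_mul']
  have hc : (l : ℂ) + (l' : ℂ) = 2 * (r : ℂ) := by exact_mod_cast congrArg Nat.cast h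
  have hexp : -(l : ℂ) * (τ : ℂ) + -(l' : ℂ) * (τ : ℂ)
      = -(r : ℂ) * (τ : ℂ) + -(r : ℂ) * (τ : ℂ) := by
    linear_combination (-(τ : ℂ)) * hc
  rw [qlanczos_aux H hH φ _ _ (hst l), qlanczos_aux H hH φ _ _ (hst r), hexp]
end

section
/- Let H be an n×n Hermitian complex matrix, β ∈ ℝ, and let (e_i) be an orthonormal basis of ℂⁿ. For each basis index i define P_i = ⟨e_i, exp(−βH) e_i⟩ (a positive real number) and the METTS vector φ_i = P_i^{−1/2} · exp(−(β/2)H) e_i. Then for every basis index i′: Σ_i P_i · |⟨e_{i′}, φ_i⟩|² = P_{i′}. In particular, the Markov chain that from state i collapses to i′ with probability p(i → i′) = |⟨e_{i′}, φ_i⟩|² leaves the Gibbs distribution (P_i / Σ_j P_j) invariant. -/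
open scoped InnerProductSpace
open NormedSpace

/-- Correctness of METTS sampling: with `P_i = ⟨e_i, exp(−βH) e_i⟩` (positive real) and
METTS vectors `φ_i = P_i^{−1/2}·exp(−(β/2)H) e_i`, one has
`Σ_i P_i·|⟨e_{i′}, φ_i⟩|² = P_{i′}` for every `i′`; hence the collapse Markov chain with
transition probabilities `p(i → i′) = |⟨e_{i′}, φ_i⟩|²` leaves the Gibbs distribution
invariant. -/
theorem metts_markov_chain_preserves_gibbs_distribution
    {N : ℕ} (H : Matrix (Fin N) (Fin N) ℂ) (hH : H.IsHermitian) (β : ℝ)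
    (e : OrthonormalBasis (Fin N) ℂ (EuclideanSpace ℂ (Fin N)))
    (P : Fin N → ℝ)
    (hP : P = fun i =>
      RCLike.re (⟪e i, Matrix.toEuclideanLin (exp ((-(β : ℂ)) • H)) (e i)⟫_ℂ))
    (φ : Fin N → EuclideanSpace ℂ (Fin N))
    (hφ : φ = fun i => (Real.sqrt (P i))⁻¹ •
      Matrix.toEuclideanLin (exp ((-((β : ℂ) / 2)) • H)) (e i)) :
    (∀ i, 0 < P i ∧
      (⟪e i, Matrix.toEuclideanLin (exp ((-(β : ℂ)) • H)) (e i)⟫_ℂ).im = 0) ∧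
    (∀ i' : Fin N, ∑ i, P i * ‖⟪e i', φ i⟫_ℂ‖ ^ 2 = P i') := by
  set A : Matrix (Fin N) (Fin N) ℂ := exp ((-((β : ℂ) / 2)) • H) with hAdef
  set T := Matrix.toEuclideanLin A with hTdef
  -- Hermitianity of the half exponential
  have hsm : ((-((β : ℂ) / 2)) • H).IsHermitian := by
    unfold Matrix.IsHermitian
    rw [Matrix.conjTranspose_smul, hH.eq]
    congr 1
    simp [RCLike.star_def]
  have hA : A.IsHermitian := Matrix.IsHermitian.exp hsm
  have hsym := Matrix.isHermitian_iff_isSymmetric.mp hA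
  -- splitting the full exponential
  have hsum : (-((β : ℂ) / 2)) • H + (-((β : ℂ) / 2)) • H = (-(β : ℂ)) • H := by
    module
  have hsplit : exp ((-(β : ℂ)) • H) = A * A := by
    rw [hAdef, ← Matrix.exp_add_of_commute _ _ (Commute.refl _), hsum]
  have hmul : ∀ v, Matrix.toEuclideanLin (exp ((-(β : ℂ)) • H)) v = T (T v) := by
    intro v
    rw [hsplit, hTdef]
    simp [Matrix.toEuclideanLin_apply, Matrix.mulVec_mulVec]
  -- injectivity: T (e i) ≠ 0
  have hzero : ((β : ℂ) / 2) • H + (-((β : ℂ) / 2)) • H = 0 := by module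
  have hinv : exp (((β : ℂ) / 2) • H) * A = 1 := by
    rw [hAdef, ← Matrix.exp_add_of_commute _ _
      (((Commute.refl H).smul_left ((β : ℂ) / 2)).smul_right (-((β : ℂ) / 2))), hzero,
      exp_zero]
  have hTne : ∀ i : Fin N, T (e i) ≠ 0 := by
    intro i h
    have h2 : Matrix.toEuclideanLin (exp (((β : ℂ) / 2) • H)) (T (e i))
        = Matrix.toEuclideanLin (exp (((β : ℂ) / 2) • H)) 0 := by rw [h]
    rw [map_zero] at h2
    have h3 : (e : Fin N → EuclideanSpace ℂ (Fin N)) i = 0 := by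
      rw [← one_smul ℂ ((e : Fin N → EuclideanSpace ℂ (Fin N)) i)]
      calc (1 : ℂ) • (e i : EuclideanSpace ℂ (Fin N))
          = Matrix.toEuclideanLin (1 : Matrix (Fin N) (Fin N) ℂ) (e i) := by
            simp [Matrix.toEuclideanLin_apply]
        _ = 0 := by
            rw [← hinv]
            simpa [hTdef, Matrix.toEuclideanLin_apply, Matrix.mulVec_mulVec] using h2
    have := e.orthonormal.1 i
    rw [h3, norm_zero] at this
    norm_num at this
  -- the inner product is the squared norm of T (e i)
  have hkey : ∀ i, ⟪e i, Matrix.toEuclideanLin (exp ((-(β : ℂ)) • H)) (e i)⟫_ℂ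
      = ((‖T (e i)‖ ^ 2 : ℝ) : ℂ) := by
    intro i
    rw [hmul, ← hsym (e i) (T (e i)), inner_self_eq_norm_sq_to_K]
    norm_cast
  have hPval : ∀ i, P i = ‖T (e i)‖ ^ 2 := by
    intro i
    simp only [hP]
    rw [hkey, RCLike.re_to_complex, Complex.ofReal_re]
  refine ⟨fun i => ⟨?_, ?_⟩, ?_⟩
  · rw [hPval]
    exact pow_pos (norm_pos_iff.mpr (hTne i)) 2
  · rw [hkey]
    exact Complex.ofReal_im _
  · intro i'
    have hterm : ∀ i, P i * ‖⟪e i', φ i⟫_ℂ‖ ^ 2 = ‖⟪e i, T (e i')⟫_ℂ‖ ^ 2 := by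
      intro i
      have hPpos : 0 < P i := by
        rw [hPval]; exact pow_pos (norm_pos_iff.mpr (hTne i)) 2
      have hin : ⟪e i', φ i⟫_ℂ = (((Real.sqrt (P i))⁻¹ : ℝ) : ℂ) * ⟪e i', T (e i)⟫_ℂ := by
        rw [hφ]
        simp only
        rw [show ((Real.sqrt (P i))⁻¹ • T (e i) : EuclideanSpace ℂ (Fin N))
            = ((((Real.sqrt (P i))⁻¹ : ℝ)) : ℂ) • T (e i) from (Complex.coe_smul _ _)]
        rw [inner_smul_right]
      rw [hin, norm_mul, mul_pow]
      have h1 : ‖((((Real.sqrt (P i))⁻¹ : ℝ)) : ℂ)‖ ^ 2 = (P i)⁻¹ := by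
        rw [Complex.norm_real, Real.norm_eq_abs, abs_of_nonneg (by positivity),
          ← Real.sqrt_inv, Real.sq_sqrt (by positivity)]
      rw [h1]
      have h2 : ⟪e i', T (e i)⟫_ℂ = ⟪T (e i'), e i⟫_ℂ := (hsym (e i') (e i)).symm
      rw [h2, ← norm_inner_symm]
      field_simp
    rw [Finset.sum_congr rfl fun i _ => hterm i]
    have hpar : ∑ i, ‖⟪e i, T (e i')⟫_ℂ‖ ^ 2 = ‖T (e i')‖ ^ 2 := by
      have hrepr : ∀ i : Fin N, ⟪e i, T (e i')⟫_ℂ = e.repr (T (e i')) i := by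
        intro i; rw [e.repr_apply_apply]
      rw [Finset.sum_congr rfl fun i _ => by rw [hrepr i]]
      rw [← e.repr.norm_map (T (e i')), EuclideanSpace.norm_eq,
        Real.sq_sqrt (by positivity)]
    rw [hpar, hPval]
end
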